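/- Let p ≥ 2 be an even integer and ζ a primitive p-th root of unity in ℂ. Then for all complex z, w with w ≠ ±ζ^ℓ z for all ℓ and z, w ≠ 0: Σ_{ℓ=0}^{p−1} (−1)^ℓ · ζ^ℓ/(w − ζ^ℓ z)² = (p²/4) · z^{p/2 − 1} · w^{p/2 − 1} · ( 1/(z^{p/2} − w^{p/2})² + 1/(z^{p/2} + w^{p/2})² ). -/

import Mathlib

open Polynomial Finset

lemma prod_sub_pow {m : ℕ} (hm : 0 < m) {η : ℂ} (hη : IsPrimitiveRoot η m) (x y : ℂ) :
    ∏ k ∈ Finset.range m, (x - η ^ k * y) = x ^ m - y ^ m := by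
  haveI : NeZero m := ⟨hm.ne'⟩
  have himg : Polynomial.nthRootsFinset m (1 : ℂ) = (Finset.range m).image (η ^ ·) := by
    ext u
    simp only [Polynomial.mem_nthRootsFinset hm (1 : ℂ), Finset.mem_image, Finset.mem_range]
    constructor
    · intro hu
      obtain ⟨i, hi, rfl⟩ := hη.eq_pow_of_pow_eq_one hu
      exact ⟨i, hi, rfl⟩
    · rintro ⟨i, hi, rfl⟩
      rw [← pow_mul, mul_comm, pow_mul, hη.pow_eq_one, one_pow]
  rw [hη.pow_sub_pow_eq_prod_sub_mul x y hm, himg, Finset.prod_image fun i hi j hj h =>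
    hη.pow_inj (Finset.mem_range.1 hi) (Finset.mem_range.1 hj) h]

lemma derivative_prod_finset {ι : Type*} [DecidableEq ι] (s : Finset ι) (f : ι → Polynomial ℂ) :
    Polynomial.derivative (∏ i ∈ s, f i) =
      ∑ i ∈ s, (∏ j ∈ s.erase i, f j) * Polynomial.derivative (f i) := by
  induction s using Finset.induction_on with
  | empty => simp
  | insert _ _ ha ih =>
    rename_i a s
    rw [Finset.prod_insert ha, Polynomial.derivative_mul, Finset.sum_insert ha,
      Finset.erase_insert ha, ih, Finset.mul_sum]
    have h2 : ∀ i ∈ s, (∏ j ∈ (insert a s).erase i, f j) * Polynomial.derivative (f i)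
        = f a * ((∏ j ∈ s.erase i, f j) * Polynomial.derivative (f i)) := by
      intro i hi
      have hia : i ≠ a := fun h => ha (h ▸ hi)
      rw [Finset.erase_insert_of_ne hia.symm,
        Finset.prod_insert (fun h => ha (Finset.mem_of_mem_erase h)), mul_assoc]
    rw [Finset.sum_congr rfl h2]
    ring

lemma key_sum {m : ℕ} (hm : 0 < m) {η : ℂ} (hη : IsPrimitiveRoot η m) {z w : ℂ}
    (hz : z ≠ 0) (hw : w ≠ 0) (hne : ∀ k : ℕ, w ≠ η ^ k * z) :
    ∑ k ∈ Finset.range m, η ^ k / (w - η ^ k * z) ^ 2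
      = (m : ℂ) ^ 2 * z ^ (m - 1) * w ^ (m - 1) / (w ^ m - z ^ m) ^ 2 := by
  have hbne : ∀ k : ℕ, w - η ^ k * z ≠ 0 := fun k => sub_ne_zero.2 (hne k)
  have hD : w ^ m - z ^ m ≠ 0 := by
    rw [← prod_sub_pow hm hη]
    exact Finset.prod_ne_zero_iff.2 fun k _ => hbne k
  have hPoly : (∏ k ∈ Finset.range m, (X - C (η ^ k * z))) = X ^ m - C (z ^ m) :=
    Polynomial.funext fun x => by
      simp [Polynomial.eval_prod, prod_sub_pow hm hη x z]
  have hd1 : (∑ k ∈ Finset.range m, ∏ j ∈ (Finset.range m).erase k, (X - C (η ^ j * z)))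
      = C (m : ℂ) * X ^ (m - 1) := by
    have h := congrArg Polynomial.derivative hPoly
    rw [_root_.derivative_prod_finset] at h
    simp only [Polynomial.derivative_sub, Polynomial.derivative_X, Polynomial.derivative_C,
      sub_zero, mul_one, Polynomial.derivative_X_pow] at h
    exact h
  have E1 : ∑ k ∈ Finset.range m, ∏ j ∈ (Finset.range m).erase k, (w - η ^ j * z)
      = (m : ℂ) * w ^ (m - 1) := by
    have h := congrArg (Polynomial.eval w) hd1
    simpa [Polynomial.eval_finset_sum, Polynomial.eval_prod] using h
  have hd2 : (∑ k ∈ Finset.range m, ∑ j ∈ (Finset.range m).erase k,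
        ∏ i ∈ ((Finset.range m).erase k).erase j, (X - C (η ^ i * z)))
      = C (m : ℂ) * (C ((m - 1 : ℕ) : ℂ) * X ^ (m - 1 - 1)) := by
    have h := congrArg Polynomial.derivative hd1
    rw [map_sum] at h
    simp only [_root_.derivative_prod_finset] at h
    simp only [Polynomial.derivative_sub, Polynomial.derivative_X, Polynomial.derivative_C,
      sub_zero, mul_one, Polynomial.derivative_C_mul, Polynomial.derivative_X_pow] at h
    exact h
  have E2 : ∑ k ∈ Finset.range m, ∑ j ∈ (Finset.range m).erase k,
        ∏ i ∈ ((Finset.range m).erase k).erase j, (w - η ^ i * z)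
      = (m : ℂ) * (((m - 1 : ℕ) : ℂ) * w ^ (m - 1 - 1)) := by
    have h := congrArg (Polynomial.eval w) hd2
    simpa [Polynomial.eval_finset_sum, Polynomial.eval_prod] using h
  have hprodE : ∀ k ∈ Finset.range m,
      (∏ j ∈ (Finset.range m).erase k, (w - η ^ j * z))
        = (w ^ m - z ^ m) * (w - η ^ k * z)⁻¹ := by
    intro k hk
    have h := Finset.prod_erase_mul (Finset.range m) (fun j => w - η ^ j * z) hk
    rw [prod_sub_pow hm hη] at h
    rw [← h, mul_assoc, mul_inv_cancel₀ (hbne k), mul_one]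
  have hprodE2 : ∀ k ∈ Finset.range m, ∀ j ∈ (Finset.range m).erase k,
      (∏ i ∈ ((Finset.range m).erase k).erase j, (w - η ^ i * z))
        = (w ^ m - z ^ m) * (w - η ^ k * z)⁻¹ * (w - η ^ j * z)⁻¹ := by
    intro k hk j hj
    have h := Finset.prod_erase_mul ((Finset.range m).erase k) (fun i => w - η ^ i * z) hj
    rw [hprodE k hk] at h
    rw [← h, mul_assoc, mul_inv_cancel₀ (hbne j), mul_one]
  have S1 : ∑ k ∈ Finset.range m, (w - η ^ k * z)⁻¹
      = (m : ℂ) * w ^ (m - 1) / (w ^ m - z ^ m) := by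
    rw [eq_div_iff hD, ← E1, Finset.sum_mul]
    exact Finset.sum_congr rfl fun k hk => by rw [hprodE k hk]; ring
  have S2 : ∑ k ∈ Finset.range m, ∑ j ∈ (Finset.range m).erase k,
        (w - η ^ k * z)⁻¹ * (w - η ^ j * z)⁻¹
      = (m : ℂ) * (((m - 1 : ℕ) : ℂ) * w ^ (m - 1 - 1)) / (w ^ m - z ^ m) := by
    rw [eq_div_iff hD, ← E2, Finset.sum_mul]
    refine Finset.sum_congr rfl fun k hk => ?_
    rw [Finset.sum_mul]
    refine Finset.sum_congr rfl fun j hj => ?_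
    rw [hprodE2 k hk j hj]; ring
  have hsq : (∑ k ∈ Finset.range m, (w - η ^ k * z)⁻¹) ^ 2
      = ∑ k ∈ Finset.range m, ((w - η ^ k * z)⁻¹) ^ 2
        + ∑ k ∈ Finset.range m, ∑ j ∈ (Finset.range m).erase k,
            (w - η ^ k * z)⁻¹ * (w - η ^ j * z)⁻¹ := by
    rw [sq, Finset.sum_mul_sum, ← Finset.sum_add_distrib]
    refine Finset.sum_congr rfl fun k hk => ?_
    rw [sq]
    exact (Finset.add_sum_erase _ (fun j => (w - η ^ k * z)⁻¹ * (w - η ^ j * z)⁻¹) hk).symm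
  have Tv : ∑ k ∈ Finset.range m, ((w - η ^ k * z)⁻¹) ^ 2
      = ((m : ℂ) * w ^ (m - 1) / (w ^ m - z ^ m)) ^ 2
        - (m : ℂ) * (((m - 1 : ℕ) : ℂ) * w ^ (m - 1 - 1)) / (w ^ m - z ^ m) := by
    rw [S1, S2] at hsq
    linear_combination -hsq
  have hterm : ∀ k ∈ Finset.range m, η ^ k / (w - η ^ k * z) ^ 2
      = z⁻¹ * (w * ((w - η ^ k * z)⁻¹) ^ 2 - (w - η ^ k * z)⁻¹) := by
    intro k hk
    have hb := hbne k
    field_simp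
    ring
  rw [Finset.sum_congr rfl hterm, ← Finset.mul_sum, Finset.sum_sub_distrib, ← Finset.mul_sum,
    Tv, S1]
  obtain ⟨n, rfl⟩ : ∃ n, m = n + 1 := ⟨m - 1, (Nat.succ_pred_eq_of_pos hm).symm⟩
  simp only [Nat.add_sub_cancel]
  rcases n with _ | k
  · have hD' : w - z ≠ 0 := by simpa using hD
    simp only [zero_add, pow_one, pow_zero, Nat.cast_one, Nat.cast_zero, one_mul, mul_one,
      zero_mul, mul_zero, zero_div, sub_zero, one_pow, Nat.zero_sub]
    field_simp
    ring
  · simp only [Nat.add_sub_cancel]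
    push_cast
    field_simp [hD]
    ring

lemma sum_range_double (f : ℕ → ℂ) : ∀ m : ℕ,
    ∑ ℓ ∈ Finset.range (2 * m), f ℓ = ∑ k ∈ Finset.range m, (f (2 * k) + f (2 * k + 1))
  | 0 => by simp
  | (m + 1) => by
    have h : 2 * (m + 1) = (2 * m) + 1 + 1 := by ring
    rw [h, Finset.sum_range_succ, Finset.sum_range_succ, sum_range_double f m,
      Finset.sum_range_succ]
    ring



/-- The planar two-point function identity for the `(2,2,p)` (`p` even) Seifert model:
for `ζ` a primitive `p`-th root of unity and `w ≠ ±ζ^ℓ z` for all `ℓ`,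
`Σ_{ℓ=0}^{p−1} (−1)^ℓ ζ^ℓ/(w − ζ^ℓ z)² = (p²/4) z^{p/2−1} w^{p/2−1}
  (1/(z^{p/2} − w^{p/2})² + 1/(z^{p/2} + w^{p/2})²)`. -/
theorem two_point_function_identity (p : ℕ) (hp : 2 ≤ p) (hpe : Even p) (ζ : ℂ)
    (hζ : IsPrimitiveRoot ζ p) (z w : ℂ) (hz : z ≠ 0) (hw : w ≠ 0)
    (hzw : ∀ ℓ : ℕ, w ≠ ζ ^ ℓ * z ∧ w ≠ -(ζ ^ ℓ * z)) :
    ∑ ℓ ∈ Finset.range p, (-1 : ℂ) ^ ℓ * ζ ^ ℓ / (w - ζ ^ ℓ * z) ^ 2 =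
      ((p : ℂ) ^ 2 / 4) * z ^ (p / 2 - 1) * w ^ (p / 2 - 1) *
        (1 / (z ^ (p / 2) - w ^ (p / 2)) ^ 2 + 1 / (z ^ (p / 2) + w ^ (p / 2)) ^ 2) := by
  obtain ⟨m, rfl⟩ := hpe
  have hm : 0 < m := by omega
  have h2m : m + m = 2 * m := (two_mul m).symm
  have hη : IsPrimitiveRoot (ζ ^ 2) m := by
    have h := hζ.pow_of_dvd (by norm_num : (2:ℕ) ≠ 0) ⟨m, by omega⟩
    rwa [show (m + m) / 2 = m from by omega] at h
  have hζm : ζ ^ m = -1 := by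
    have h1 : ζ ^ m * ζ ^ m = 1 := by rw [← pow_add]; exact hζ.pow_eq_one
    rcases mul_self_eq_one_iff.1 h1 with h | h
    · exact absurd h (hζ.pow_ne_one_of_pos_of_lt hm.ne' (by omega))
    · exact h
  have hζ0 : ζ ≠ 0 := fun h => by
    have h1 := hζ.pow_eq_one
    rw [h, zero_pow (by omega : m + m ≠ 0)] at h1
    exact zero_ne_one h1
  have hne1 : ∀ k : ℕ, w ≠ (ζ ^ 2) ^ k * z := fun k => by
    have h := (hzw (2 * k)).1; rwa [pow_mul] at h
  have hne2 : ∀ k : ℕ, w ≠ (ζ ^ 2) ^ k * (ζ * z) := fun k => by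
    have h := (hzw (2 * k + 1)).1
    rwa [pow_succ, pow_mul, mul_assoc] at h
  have key2 := key_sum hm hη hz hw hne1
  have key3 := key_sum hm hη (mul_ne_zero hζ0 hz) hw hne2
  have hD1 : w ^ m - z ^ m ≠ 0 := by
    rw [← prod_sub_pow hm hη]
    exact Finset.prod_ne_zero_iff.2 fun k _ => sub_ne_zero.2 (hne1 k)
  have hzm : (ζ * z) ^ m = -(z ^ m) := by rw [mul_pow, hζm, neg_one_mul]
  have hD2 : w ^ m + z ^ m ≠ 0 := by
    have h0 : w ^ m - (ζ * z) ^ m ≠ 0 := by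
      rw [← prod_sub_pow hm hη]
      exact Finset.prod_ne_zero_iff.2 fun k _ => sub_ne_zero.2 (hne2 k)
    rwa [hzm, sub_neg_eq_add] at h0
  rw [h2m, sum_range_double]
  have hterm : ∀ k ∈ Finset.range m,
      ((-1:ℂ) ^ (2*k) * ζ ^ (2*k) / (w - ζ ^ (2*k) * z) ^ 2
        + (-1:ℂ) ^ (2*k+1) * ζ ^ (2*k+1) / (w - ζ ^ (2*k+1) * z) ^ 2)
      = (ζ^2) ^ k / (w - (ζ^2)^k * z) ^ 2
        + (-ζ) * ((ζ^2)^k / (w - (ζ^2)^k * (ζ*z)) ^ 2) := by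
    intro k _
    have e1 : ((-1:ℂ)) ^ (2*k) = 1 := by rw [pow_mul]; norm_num
    have e2 : ((-1:ℂ)) ^ (2*k+1) = -1 := by rw [pow_succ, e1, one_mul]
    have e3 : ζ ^ (2*k+1) = (ζ^2)^k * ζ := by rw [pow_succ, pow_mul]
    rw [e1, e2, e3, pow_mul, one_mul]
    ring
  rw [Finset.sum_congr rfl hterm, Finset.sum_add_distrib, ← Finset.mul_sum, key2, key3,
    hzm, sub_neg_eq_add]
  have e5 : (-ζ) * ((m:ℂ)^2 * (ζ*z)^(m-1) * w^(m-1) / (w^m + z^m)^2)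
      = (m:ℂ)^2 * z^(m-1) * w^(m-1) / (w^m + z^m)^2 := by
    have h6 : ζ * ζ ^ (m-1) = -1 := by
      rw [← pow_succ', show m - 1 + 1 = m from by omega, hζm]
    rw [mul_pow]
    linear_combination (-((m:ℂ)^2 * z^(m-1) * w^(m-1) / (w^m + z^m)^2)) * h6
  rw [e5]
  have hM : 2 * m / 2 = m := by omega
  rw [hM]
  have hcast : ((2 * m : ℕ) : ℂ) = 2 * (m : ℂ) := by push_cast; ring
  rw [hcast]
  have hsq1 : (z ^ m - w ^ m) ^ 2 = (w ^ m - z ^ m) ^ 2 := by ring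
  have hsq2 : z ^ m + w ^ m = w ^ m + z ^ m := by ring
  rw [hsq1, hsq2]
  ring
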